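/- Any continuous function Φ : [−M, M]^m → ℝ^n on a compact box can be uniformly approximated to any accuracy ε in the ℓ∞ norm by a two-layer feedforward neural network with a non-polynomial continuous activation function. -/

import Mathlib

open MeasureTheory Set Polynomial
open scoped Convolution

lemma integral_mem_closed_submodule {E : Type*} [NormedAddCommGroup E] [NormedSpace ℝ E]
    [CompleteSpace E] {S : Submodule ℝ E} (hS : IsClosed (S : Set E))
    {μ : Measure ℝ} {Ψ : ℝ → E} (hΨ : Integrable Ψ μ) (h : ∀ y, Ψ y ∈ S) :
    ∫ y, Ψ y ∂μ ∈ S := by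
  by_contra hx
  obtain ⟨f, u, hfu, hux⟩ := geometric_hahn_banach_closed_point (S.convex) hS hx
  have hu0 : (0:ℝ) < u := by simpa using hfu 0 (S.zero_mem)
  have hf0 : ∀ a ∈ S, f a = 0 := by
    intro a ha
    by_contra hfa
    have h1 : ((u + 1) / f a) * f a < u := by
      simpa using hfu (((u + 1) / f a) • a) (S.smul_mem _ ha)
    rw [div_mul_cancel₀ _ hfa] at h1; linarith
  have : f (∫ y, Ψ y ∂μ) = 0 := by
    rw [← f.integral_comp_comm hΨ]
    simp only [hf0 _ (h _), integral_zero]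
  linarith [this ▸ hux]

lemma deriv_mem_of_closed {K : Type*} [MetricSpace K] [CompactSpace K]
    {S : Submodule ℝ C(K, ℝ)} (hS : IsClosed (S : Set C(K, ℝ)))
    (F G : ℝ → C(K, ℝ))
    (hd : ∀ (x : K) (l : ℝ), HasDerivAt (fun s => F s x) (G l x) l)
    (hGc : Continuous fun p : ℝ × K => G p.1 p.2)
    (hF : ∀ l, F l ∈ S) (l₀ : ℝ) : G l₀ ∈ S := by
  have key : Filter.Tendsto (fun h : ℝ => (h⁻¹ • (F (l₀ + h) - F l₀)))
      (nhdsWithin 0 {0}ᶜ) (nhds (G l₀)) := by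
    rw [Metric.tendsto_nhdsWithin_nhds]
    intro ε hε
    have hu : UniformContinuous fun p : Icc (l₀ - 1) (l₀ + 1) × K => G p.1 p.2 :=
      CompactSpace.uniformContinuous_of_continuous
        (hGc.comp (by continuity : Continuous fun p : Icc (l₀ - 1) (l₀ + 1) × K =>
          ((p.1 : ℝ), p.2)))
    rw [Metric.uniformContinuous_iff] at hu
    obtain ⟨δ, hδ, hud⟩ := hu ε hε
    refine ⟨min δ 1, by positivity, ?_⟩
    intro h hh hdist
    rw [dist_zero_right, Real.norm_eq_abs] at hdist
    have hne : h ≠ 0 := hh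
    have habs1 : |h| ≤ 1 := le_of_lt (lt_of_lt_of_le hdist (min_le_right _ _))
    have habsδ : |h| < δ := lt_of_lt_of_le hdist (min_le_left _ _)
    rw [ContinuousMap.dist_lt_iff hε]
    intro x
    -- mean value theorem
    have hmvt : ∃ ξ : ℝ, |ξ - l₀| < |h| ∧ G ξ x = (F (l₀ + h) x - F l₀ x) / h := by
      rcases lt_or_gt_of_ne hne with hneg | hpos
      · have hab : l₀ + h < l₀ := by linarith
        obtain ⟨ξ, hξ, hsl⟩ := exists_hasDerivAt_eq_slope (fun s => F s x) (fun s => G s x)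
          hab (fun s _ => (hd x s).continuousAt.continuousWithinAt) (fun s _ => hd x s)
        refine ⟨ξ, ?_, ?_⟩
        · rw [abs_of_neg hneg]; rw [mem_Ioo] at hξ
          rw [abs_lt]; constructor <;> linarith [hξ.1, hξ.2]
        · rw [hsl, show l₀ - (l₀ + h) = -h by ring, div_neg, ← neg_div, neg_sub]
      · have hab : l₀ < l₀ + h := by linarith
        obtain ⟨ξ, hξ, hsl⟩ := exists_hasDerivAt_eq_slope (fun s => F s x) (fun s => G s x)
          hab (fun s _ => (hd x s).continuousAt.continuousWithinAt) (fun s _ => hd x s)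
        refine ⟨ξ, ?_, ?_⟩
        · rw [abs_of_pos hpos]; rw [mem_Ioo] at hξ
          rw [abs_lt]; constructor <;> linarith [hξ.1, hξ.2]
        · rw [hsl]; congr 1; ring
    obtain ⟨ξ, hξl, hξv⟩ := hmvt
    have hξI : ξ ∈ Icc (l₀ - 1) (l₀ + 1) := by
      rw [abs_lt] at hξl; constructor <;> nlinarith [abs_nonneg h, habs1]
    have hl₀I : l₀ ∈ Icc (l₀ - 1) (l₀ + 1) := by constructor <;> linarith
    have hdd : dist ((⟨ξ, hξI⟩ : Icc (l₀ - 1) (l₀ + 1)), x) ((⟨l₀, hl₀I⟩, x)) < δ := by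
      rw [Prod.dist_eq]
      simp only [Subtype.dist_eq, dist_self]
      rw [max_eq_left dist_nonneg, Real.dist_eq]
      exact lt_of_lt_of_le hξl habsδ.le
    have := hud hdd
    simp only at this
    calc dist ((h⁻¹ • (F (l₀ + h) - F l₀)) x) (G l₀ x)
        = dist (G ξ x) (G l₀ x) := by
          congr 1
          simp only [ContinuousMap.smul_apply, ContinuousMap.sub_apply, smul_eq_mul]
          rw [hξv]; field_simp
      _ < ε := this
  refine hS.mem_of_tendsto key ?_
  filter_upwards with h
  exact S.smul_mem _ (S.sub_mem (hF _) (hF _))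

lemma stepA {σ : ℝ → ℝ} (hσc : Continuous σ) {R : ℝ} (φ : ContDiffBump (0:ℝ)) (a b : ℝ)
    (F : C(Icc (-R) R, ℝ))
    (hF : ∀ t : Icc (-R) R,
      F t = ((φ.normed volume) ⋆[ContinuousLinearMap.lsmul ℝ ℝ, volume] σ) (a * ↑t + b)) :
    F ∈ (Submodule.span ℝ
      {f : C(Icc (-R) R, ℝ) | ∃ c d : ℝ, ∀ t : Icc (-R) R, f t = σ (c * ↑t + d)}).topologicalClosure := by
  set S := (Submodule.span ℝ
      {f : C(Icc (-R) R, ℝ) | ∃ c d : ℝ, ∀ t : Icc (-R) R, f t = σ (c * ↑t + d)}) with hSdef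
  set ν := φ.normed volume with hν
  have hνc : Continuous ν := φ.continuous_normed
  set T : C(ℝ × Icc (-R) R, ℝ) :=
    ⟨fun p => σ (a * ↑p.2 + b - p.1), by
      apply hσc.comp
      exact ((continuous_const.mul (continuous_subtype_val.comp continuous_snd)).add
        continuous_const).sub continuous_fst⟩ with hT
  set Ψ : ℝ → C(Icc (-R) R, ℝ) := fun y => ν y • T.curry y with hΨ
  have hΨc : Continuous Ψ := hνc.smul (map_continuous T.curry)
  have hsupp : HasCompactSupport Ψ := by
    apply (φ.hasCompactSupport_normed (μ := volume)).mono
    intro y hy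
    simp only [Function.mem_support, hΨ, ne_eq] at hy ⊢
    intro h0
    exact hy (by rw [show ν y = 0 from h0, zero_smul])
  have hint : Integrable Ψ volume := hΨc.integrable_of_hasCompactSupport hsupp
  have hmem : ∀ y, Ψ y ∈ S.topologicalClosure := by
    intro y
    apply S.le_topologicalClosure
    exact S.smul_mem _ (Submodule.subset_span ⟨a, b - y, fun t => by
      simp [hT, ← add_sub_assoc]⟩)
  have hI : ∫ y, Ψ y ∈ S.topologicalClosure :=
    integral_mem_closed_submodule S.isClosed_topologicalClosure hint hmem
  have : F = ∫ y, Ψ y := by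
    ext t
    rw [hF t]
    have := (ContinuousMap.evalCLM ℝ t).integral_comp_comm hint
    rw [convolution_def]
    simp only [ContinuousLinearMap.lsmul_apply, smul_eq_mul]
    rw [show (∫ y, Ψ y) t = (ContinuousMap.evalCLM ℝ t) (∫ y, Ψ y) from rfl, ← this]
    rfl
  rw [this]; exact hI

lemma stepB {σ : ℝ → ℝ} (hσc : Continuous σ) {R : ℝ} (φ : ContDiffBump (0:ℝ)) (j : ℕ) :
    ∀ (a b : ℝ) (F : C(Icc (-R) R, ℝ)),
    (∀ t : Icc (-R) R, F t = (↑t)^j *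
      iteratedDeriv j ((φ.normed volume) ⋆[ContinuousLinearMap.lsmul ℝ ℝ, volume] σ) (a * ↑t + b)) →
    F ∈ (Submodule.span ℝ
      {f : C(Icc (-R) R, ℝ) | ∃ c d : ℝ, ∀ t : Icc (-R) R, f t = σ (c * ↑t + d)}).topologicalClosure := by
  set g := (φ.normed volume) ⋆[ContinuousLinearMap.lsmul ℝ ℝ, volume] σ with hg
  have hgsm : ContDiff ℝ ((⊤:ℕ∞) : WithTop ℕ∞) g :=
    HasCompactSupport.contDiff_convolution_left _ φ.hasCompactSupport_normed
      φ.contDiff_normed (hσc.locallyIntegrable)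
  have hgc : ∀ i : ℕ, Continuous (iteratedDeriv i g) := fun i =>
    hgsm.continuous_iteratedDeriv i (by exact_mod_cast le_top)
  have hgd : ∀ i : ℕ, Differentiable ℝ (iteratedDeriv i g) := fun i =>
    hgsm.differentiable_iteratedDeriv i (by exact_mod_cast lt_top_iff_ne_top.2 (by simp))
  induction j with
  | zero =>
    intro a b F hF
    exact stepA hσc φ a b F (fun t => by rw [hF t]; simp [iteratedDeriv_zero, hg])
  | succ j ih =>
    intro a b F hF
    set G : ℝ → C(Icc (-R) R, ℝ) := fun l =>
      ⟨fun t => (↑t)^(j+1) * iteratedDeriv (j+1) g (l * ↑t + b), by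
        exact ((continuous_subtype_val.pow _).mul ((hgc (j+1)).comp
          ((continuous_const.mul continuous_subtype_val).add continuous_const)))⟩ with hG
    set F' : ℝ → C(Icc (-R) R, ℝ) := fun l =>
      ⟨fun t => (↑t)^j * iteratedDeriv j g (l * ↑t + b), by
        exact ((continuous_subtype_val.pow _).mul ((hgc j).comp
          ((continuous_const.mul continuous_subtype_val).add continuous_const)))⟩ with hF'
    have : F = G a := by ext t; rw [hF t]; rfl
    rw [this]
    apply deriv_mem_of_closed (Submodule.isClosed_topologicalClosure _) F' G
    · intro x l
      have hinner : HasDerivAt (fun s : ℝ => s * ↑x + b) (↑x : ℝ) l :=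
        (hasDerivAt_mul_const (↑x : ℝ)).add_const b
      have houter : HasDerivAt (iteratedDeriv j g) (iteratedDeriv (j+1) g (l * ↑x + b))
          (l * ↑x + b) := by
        rw [iteratedDeriv_succ]
        exact ((hgd j) (l * ↑x + b)).hasDerivAt
      have h2 := (houter.comp l hinner).const_mul ((↑x : ℝ)^j)
      have heq : (G l) x = ↑x ^ j * (iteratedDeriv (j+1) g (l * ↑x + b) * ↑x) := by
        show (↑x:ℝ)^(j+1) * iteratedDeriv (j+1) g (l * ↑x + b) = _
        ring
      rw [heq]
      exact h2
    · exact ((continuous_subtype_val.pow _).comp continuous_snd).mul ((hgc (j+1)).comp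
        (((continuous_fst.mul (continuous_subtype_val.comp continuous_snd))).add
          continuous_const))
    · intro l
      exact ih l b (F' l) (fun t => rfl)

lemma poly_of_iteratedDeriv_zero : ∀ (k : ℕ) (g : ℝ → ℝ),
    ContDiff ℝ ((⊤:ℕ∞) : WithTop ℕ∞) g → iteratedDeriv k g = 0 →
    ∃ p : Polynomial ℝ, p.degree < (k:ℕ) ∧ g = fun x => p.eval x := by
  intro k
  induction k with
  | zero =>
    intro g _ h0
    refine ⟨0, by simp, ?_⟩
    simp only [iteratedDeriv_zero] at h0; rw [h0]; funext x; simp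
  | succ k ih =>
    intro g hg h0
    rw [iteratedDeriv_succ'] at h0
    have hg' : ContDiff ℝ ((⊤:ℕ∞) : WithTop ℕ∞) (deriv g) :=
      (contDiff_infty_iff_deriv.1 hg).2
    obtain ⟨p, hpdeg, hp⟩ := ih (deriv g) hg' h0
    -- antiderivative of p
    set q : Polynomial ℝ := p.sum fun i a => C (a / (i+1)) * X^(i+1) with hq
    have hqd : q.derivative = p := by
      rw [hq, Polynomial.sum_def, map_sum]
      have : ∀ i ∈ p.support, (C (p.coeff i / (i+1)) * X^(i+1)).derivative
          = C (p.coeff i) * X^i := by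
        intro i _
        rw [Polynomial.derivative_C_mul_X_pow]
        congr 1
        have hne : (i:ℝ)+1 ≠ 0 := by positivity
        push_cast
        field_simp
      rw [Finset.sum_congr rfl this]
      exact Polynomial.sum_C_mul_X_pow_eq p
    have hqdeg : q.degree < ((k+1:ℕ):WithBot ℕ) := by
      rw [hq, Polynomial.sum_def]
      apply lt_of_le_of_lt (Polynomial.degree_sum_le _ _)
      rw [Finset.sup_lt_iff (by exact_mod_cast WithBot.bot_lt_coe (k+1))]
      intro i hi
      apply lt_of_le_of_lt (Polynomial.degree_C_mul_X_pow_le _ _)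
      have hik : i < k := by
        have := Polynomial.le_degree_of_mem_supp i hi
        have := lt_of_le_of_lt this hpdeg
        exact_mod_cast this
      exact_mod_cast Nat.succ_lt_succ hik
    have hconst : ∀ x : ℝ, g x - q.eval x = g 0 - q.eval 0 := by
      have hder : ∀ x : ℝ, deriv (fun y => g y - q.eval y) x = 0 := by
        intro x
        rw [deriv_fun_sub (hg.differentiable (by simp) x)
          ((Polynomial.differentiable q) x)]
        rw [Polynomial.deriv, hqd, hp]
        ring
      intro x
      exact is_const_of_deriv_eq_zero (by
        exact ((hg.differentiable (by simp)).sub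
          (Polynomial.differentiable q))) hder x 0
    refine ⟨q + C (g 0 - q.eval 0), ?_, ?_⟩
    · apply lt_of_le_of_lt (Polynomial.degree_add_le _ _)
      rw [max_lt_iff]
      exact ⟨hqdeg, lt_of_le_of_lt Polynomial.degree_C_le (by exact_mod_cast Nat.succ_pos k)⟩
    · funext x
      have := hconst x
      simp only [eval_add, eval_C]
      linarith

lemma stepC {σ : ℝ → ℝ} (hσc : Continuous σ)
    (hσp : ∀ p : Polynomial ℝ, σ ≠ fun x => p.eval x) {R : ℝ} (k : ℕ)
    (F : C(Icc (-R) R, ℝ)) (hF : ∀ t : Icc (-R) R, F t = (↑t:ℝ)^k) :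
    F ∈ (Submodule.span ℝ
      {f : C(Icc (-R) R, ℝ) | ∃ c d : ℝ, ∀ t : Icc (-R) R, f t = σ (c * ↑t + d)}).topologicalClosure := by
  by_cases hex : ∃ (φ : ContDiffBump (0:ℝ)) (θ : ℝ),
      iteratedDeriv k ((φ.normed volume) ⋆[ContinuousLinearMap.lsmul ℝ ℝ, volume] σ) θ ≠ 0
  · obtain ⟨φ, θ, hθ⟩ := hex
    set c := iteratedDeriv k ((φ.normed volume) ⋆[ContinuousLinearMap.lsmul ℝ ℝ, volume] σ) θ
      with hc
    set G0 : C(Icc (-R) R, ℝ) :=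
      ⟨fun t => (↑t:ℝ)^k * c, (continuous_subtype_val.pow _).mul continuous_const⟩ with hG0
    have h1 := stepB hσc (R := R) φ k 0 θ G0 (fun t => by
      rw [hG0]; simp only [ContinuousMap.coe_mk]; rw [hc]; norm_num)
    have h2 := Submodule.smul_mem _ c⁻¹ h1
    have : F = c⁻¹ • G0 := by
      ext t
      simp only [hG0, ContinuousMap.smul_apply, ContinuousMap.coe_mk, smul_eq_mul, hF t]
      field_simp
    rw [this]; exact h2
  · exfalso
    push_neg at hex
    set φi : ℕ → ContDiffBump (0:ℝ) := fun i =>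
      ⟨((i:ℝ)+1)⁻¹, 2*((i:ℝ)+1)⁻¹, by positivity, by
        rw [two_mul]; nlinarith [inv_pos.2 (by positivity : (0:ℝ) < (i:ℝ)+1)]⟩ with hφi
    set g : ℕ → ℝ → ℝ := fun i =>
      ((φi i).normed volume) ⋆[ContinuousLinearMap.lsmul ℝ ℝ, volume] σ with hgdef
    have hgsm : ∀ i, ContDiff ℝ ((⊤:ℕ∞) : WithTop ℕ∞) (g i) := fun i =>
      HasCompactSupport.contDiff_convolution_left _ (φi i).hasCompactSupport_normed
        (φi i).contDiff_normed (hσc.locallyIntegrable)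
    have hgzero : ∀ i, iteratedDeriv k (g i) = 0 := fun i => funext fun θ => hex (φi i) θ
    have hpoly : ∀ i, ∃ p : Polynomial ℝ, p.degree < (k:ℕ) ∧ g i = fun x => p.eval x :=
      fun i => poly_of_iteratedDeriv_zero k (g i) (hgsm i) (hgzero i)
    choose p hpdeg hpg using hpoly
    have hconv : ∀ x : ℝ, Filter.Tendsto (fun i => g i x) Filter.atTop (nhds (σ x)) := by
      intro x
      apply ContDiffBump.convolution_tendsto_right_of_continuous (μ := volume)
        (φ := φi) _ hσc x
      have h0 : Filter.Tendsto (fun i : ℕ => ((i:ℝ)+1)⁻¹) Filter.atTop (nhds 0) := by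
        simpa [one_div] using tendsto_one_div_add_atTop_nhds_zero_nat (𝕜 := ℝ)
      simpa using h0.const_mul 2
    -- Lagrange interpolation setup
    set s : Finset ℕ := Finset.range (k+1) with hs
    set v : ℕ → ℝ := fun j => (j:ℝ) with hv
    have hvs : Set.InjOn v s := fun a _ b _ h => Nat.cast_injective h
    set q : Polynomial ℝ := Lagrange.interpolate s v (fun j => σ (v j)) with hq
    apply hσp q
    funext x
    have heval : ∀ i, (p i).eval x
        = ∑ j ∈ s, (g i (v j)) * (Lagrange.basis s v j).eval x := by
      intro i
      have hdeg : (p i).degree < (s.card : ℕ) := by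
        apply lt_of_lt_of_le (hpdeg i)
        rw [hs, Finset.card_range]
        exact_mod_cast Nat.le_succ k
      have := Lagrange.eq_interpolate hvs hdeg
      conv_lhs => rw [this]
      rw [Lagrange.interpolate_apply, Polynomial.eval_finset_sum]
      refine Finset.sum_congr rfl fun j _ => ?_
      rw [eval_mul, eval_C]
      congr 1
      rw [hpg i]
    have hlim1 : Filter.Tendsto (fun i => g i x) Filter.atTop (nhds (σ x)) := hconv x
    have hlim2 : Filter.Tendsto (fun i => g i x) Filter.atTop
        (nhds (∑ j ∈ s, σ (v j) * (Lagrange.basis s v j).eval x)) := by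
      have : (fun i => g i x) = fun i => ∑ j ∈ s, (g i (v j)) * (Lagrange.basis s v j).eval x := by
        funext i
        conv_lhs => rw [hpg i]
        exact heval i
      rw [this]
      exact tendsto_finset_sum _ fun j _ => (hconv (v j)).mul_const _
    have := tendsto_nhds_unique hlim1 hlim2
    rw [this, hq, Lagrange.interpolate_apply, Polynomial.eval_finset_sum]
    exact Finset.sum_congr rfl fun j _ => by rw [eval_mul, eval_C]

noncomputable def SM (σ : ℝ → ℝ) (m : ℕ) (M : ℝ) :
    Submodule ℝ C((Icc (fun _ => -M) (fun _ => M) : Set (Fin m → ℝ)), ℝ) :=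
  Submodule.span ℝ {f | ∃ (w : Fin m → ℝ) (θ : ℝ),
    ∀ x : (Icc (fun _ => -M) (fun _ => M) : Set (Fin m → ℝ)), f x = σ (∑ i, w i * (x : Fin m → ℝ) i + θ)}

lemma coord_abs_le {m : ℕ} {M : ℝ} (hM : 0 < M) (x : (Icc (fun _ => -M) (fun _ => M) : Set (Fin m → ℝ)))
    (i : Fin m) : |(x : Fin m → ℝ) i| ≤ M := by
  obtain ⟨x, hx⟩ := x
  rw [mem_Icc] at hx
  rw [abs_le]
  exact ⟨hx.1 i, hx.2 i⟩

lemma stepD1 {σ : ℝ → ℝ} {m : ℕ} {M : ℝ} (hσc : Continuous σ)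
    (hσp : ∀ p : Polynomial ℝ, σ ≠ fun x => p.eval x) (hM : 0 < M)
    (w : Fin m → ℝ) (k : ℕ)
    (F : C((Icc (fun _ => -M) (fun _ => M) : Set (Fin m → ℝ)), ℝ))
    (hF : ∀ x, F x = (∑ i, w i * (x : Fin m → ℝ) i)^k) :
    F ∈ (SM σ m M).topologicalClosure := by
  set R : ℝ := M * ∑ i, |w i| + 1 with hR
  have hRpos : 0 < R := by
    have : 0 ≤ ∑ i, |w i| := Finset.sum_nonneg fun i _ => abs_nonneg _
    nlinarith
  have hsum : ∀ x : (Icc (fun _ => -M) (fun _ => M) : Set (Fin m → ℝ)),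
      (∑ i, w i * (x : Fin m → ℝ) i) ∈ Icc (-R) R := by
    intro x
    have habs : |∑ i, w i * (x : Fin m → ℝ) i| ≤ M * ∑ i, |w i| := by
      calc |∑ i, w i * (x : Fin m → ℝ) i| ≤ ∑ i, |w i * (x : Fin m → ℝ) i| :=
            Finset.abs_sum_le_sum_abs _ _
        _ ≤ ∑ i, |w i| * M := by
            apply Finset.sum_le_sum
            intro i _
            rw [abs_mul]
            exact mul_le_mul_of_nonneg_left (coord_abs_le hM x i) (abs_nonneg _)
        _ = M * ∑ i, |w i| := by rw [Finset.mul_sum]; exact Finset.sum_congr rfl fun i _ => mul_comm _ _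
    rw [mem_Icc, ← abs_le]
    exact habs.trans (by rw [hR]; linarith)
  set ι : C((Icc (fun _ => -M) (fun _ => M) : Set (Fin m → ℝ)), (Icc (-R) R : Set ℝ)) :=
    ⟨fun x => ⟨∑ i, w i * (x : Fin m → ℝ) i, hsum x⟩, by
      apply Continuous.subtype_mk
      exact continuous_finset_sum _ fun i _ =>
        continuous_const.mul ((continuous_apply i).comp continuous_subtype_val)⟩ with hι
  set comp := ContinuousMap.compRightAlgHom ℝ ℝ ι with hcomp
  have hcompc : Continuous comp := ContinuousMap.compRightAlgHom_continuous ℝ ℝ ι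
  -- the univariate span maps into SM
  set SU := Submodule.span ℝ
      {f : C(Icc (-R) R, ℝ) | ∃ c d : ℝ, ∀ t : Icc (-R) R, f t = σ (c * ↑t + d)} with hSU
  have hle : SU.topologicalClosure ≤
      ((SM σ m M).topologicalClosure).comap (comp.toLinearMap : _ →ₗ[ℝ] _) := by
    apply Submodule.topologicalClosure_minimal
    · rw [hSU, Submodule.span_le]
      rintro f ⟨c, d, hf⟩
      simp only [SetLike.mem_coe, Submodule.mem_comap, AlgHom.toLinearMap_apply]
      apply (SM σ m M).le_topologicalClosure
      apply Submodule.subset_span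
      refine ⟨c • w, d, fun x => ?_⟩
      have : (comp f) x = f (ι x) := rfl
      rw [this, hf (ι x)]
      congr 1
      simp only [hι, ContinuousMap.coe_mk, Pi.smul_apply, smul_eq_mul]
      rw [Finset.mul_sum]
      congr 1
      refine Finset.sum_congr rfl fun i _ => by ring
    · exact IsClosed.preimage hcompc (Submodule.isClosed_topologicalClosure _)
  -- x ↦ t^k is in the univariate closure
  have hx : (⟨fun t : Icc (-R) R => (↑t:ℝ)^k,
      (continuous_subtype_val.pow _)⟩ : C(Icc (-R) R, ℝ)) ∈ SU.topologicalClosure :=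
    stepC hσc hσp k _ (fun t => rfl)
  have := hle hx
  simp only [Submodule.mem_comap, AlgHom.toLinearMap_apply] at this
  have hFeq : F = comp ⟨fun t : Icc (-R) R => (↑t:ℝ)^k, (continuous_subtype_val.pow _)⟩ := by
    ext x
    rw [hF x]
    rfl
  rw [hFeq]
  exact this

lemma stepD2 {σ : ℝ → ℝ} {m : ℕ} {M : ℝ} (hσc : Continuous σ)
    (hσp : ∀ p : Polynomial ℝ, σ ≠ fun x => p.eval x) (hM : 0 < M) : ∀ (j d : ℕ)
    (v : Fin j → Fin m) (w : Fin m → ℝ)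
    (F : C((Icc (fun _ => -M) (fun _ => M) : Set (Fin m → ℝ)), ℝ)),
    (∀ x, F x = (∏ r, (x : Fin m → ℝ) (v r)) * (∑ i, w i * (x : Fin m → ℝ) i)^d) →
    F ∈ (SM σ m M).topologicalClosure := by
  intro j
  induction j with
  | zero =>
    intro d v w F hF
    exact stepD1 hσc hσp hM w d F (fun x => by rw [hF x]; simp)
  | succ j ih =>
    intro d v w F hF
    set i0 := v (Fin.last j) with hi0
    set vc : Fin j → Fin m := fun r => v r.castSucc with hvc
    have hCx : Continuous fun x : (Icc (fun _ => -M) (fun _ => M) : Set (Fin m → ℝ)) =>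
        ∏ r, (x : Fin m → ℝ) (vc r) :=
      continuous_finset_prod _ fun r _ => (continuous_apply _).comp continuous_subtype_val
    have hB : Continuous fun x : (Icc (fun _ => -M) (fun _ => M) : Set (Fin m → ℝ)) =>
        (x : Fin m → ℝ) i0 := (continuous_apply _).comp continuous_subtype_val
    have hAw : Continuous fun x : (Icc (fun _ => -M) (fun _ => M) : Set (Fin m → ℝ)) =>
        ∑ q, w q * (x : Fin m → ℝ) q :=
      continuous_finset_sum _ fun q _ =>
        continuous_const.mul ((continuous_apply _).comp continuous_subtype_val)
    set F' : ℝ → C((Icc (fun _ => -M) (fun _ => M) : Set (Fin m → ℝ)), ℝ) := fun s =>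
      ⟨fun x => (∏ r, (x : Fin m → ℝ) (vc r)) *
        ((∑ q, w q * (x : Fin m → ℝ) q) + s * (x : Fin m → ℝ) i0)^(d+1),
        hCx.mul ((hAw.add (continuous_const.mul hB)).pow _)⟩ with hF'
    set G : ℝ → C((Icc (fun _ => -M) (fun _ => M) : Set (Fin m → ℝ)), ℝ) := fun s =>
      ⟨fun x => ((d:ℝ)+1) * ((∏ r, (x : Fin m → ℝ) (vc r)) * (x : Fin m → ℝ) i0 *
        ((∑ q, w q * (x : Fin m → ℝ) q) + s * (x : Fin m → ℝ) i0)^d),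
        continuous_const.mul ((hCx.mul hB).mul ((hAw.add (continuous_const.mul hB)).pow _))⟩
        with hG
    have hG0 : G 0 ∈ (SM σ m M).topologicalClosure := by
      apply deriv_mem_of_closed (Submodule.isClosed_topologicalClosure _) F' G
      · intro x l
        have hinner : HasDerivAt (fun s : ℝ =>
            (∑ q, w q * (x : Fin m → ℝ) q) + s * (x : Fin m → ℝ) i0)
            ((x : Fin m → ℝ) i0) l :=
          (hasDerivAt_mul_const _).const_add _
        have hpow := hinner.pow (d+1)
        have h2 := hpow.const_mul (∏ r, (x : Fin m → ℝ) (vc r))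
        have heq : (G l) x = (∏ r, (x : Fin m → ℝ) (vc r)) *
            (((d+1 : ℕ) : ℝ) * ((∑ q, w q * (x : Fin m → ℝ) q) + l * (x : Fin m → ℝ) i0)
              ^ (d + 1 - 1) * (x : Fin m → ℝ) i0) := by
          show ((d:ℝ)+1) * _ = _
          rw [Nat.add_sub_cancel]
          push_cast
          ring
        rw [heq]
        exact h2
      · refine continuous_const.mul ?_
        refine (((hCx.comp continuous_snd).mul (hB.comp continuous_snd)).mul ?_)
        exact (((hAw.comp continuous_snd).add
          (continuous_fst.mul (hB.comp continuous_snd))).pow _)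
      · intro s
        apply ih (d+1) vc (w + s • (Pi.single i0 1 : Fin m → ℝ))
        intro x
        have hsum : ∑ q, (w + s • (Pi.single i0 1 : Fin m → ℝ)) q * (x : Fin m → ℝ) q
            = (∑ q, w q * (x : Fin m → ℝ) q) + s * (x : Fin m → ℝ) i0 := by
          rw [Finset.sum_congr rfl (fun q _ => by
            rw [Pi.add_apply, Pi.smul_apply, add_mul]), Finset.sum_add_distrib]
          congr 1
          rw [Finset.sum_congr rfl (fun q _ => by
            rw [smul_eq_mul, Pi.single_apply, mul_ite, mul_one, mul_zero, ite_mul, zero_mul])]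
          simp [Finset.sum_ite_eq']
        rw [hsum]
        rfl
    have hd1 : ((d:ℝ)+1) ≠ 0 := by positivity
    have hFeq : F = ((d:ℝ)+1)⁻¹ • G 0 := by
      ext x
      rw [hF x]
      simp only [hG, ContinuousMap.smul_apply, ContinuousMap.coe_mk, smul_eq_mul,
        zero_mul, add_zero]
      rw [Fin.prod_univ_castSucc, inv_mul_cancel_left₀ hd1]
    rw [hFeq]
    exact Submodule.smul_mem _ _ hG0

lemma monomial_mem {σ : ℝ → ℝ} {m : ℕ} {M : ℝ} (hσc : Continuous σ)
    (hσp : ∀ p : Polynomial ℝ, σ ≠ fun x => p.eval x) (hM : 0 < M) (j : ℕ)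
    (v : Fin j → Fin m)
    (F : C((Icc (fun _ => -M) (fun _ => M) : Set (Fin m → ℝ)), ℝ))
    (hF : ∀ x, F x = ∏ r, (x : Fin m → ℝ) (v r)) :
    F ∈ (SM σ m M).topologicalClosure :=
  stepD2 hσc hσp hM j 0 v 0 F (fun x => by rw [hF x]; simp)

lemma all_mem {σ : ℝ → ℝ} {m : ℕ} {M : ℝ} (hσc : Continuous σ)
    (hσp : ∀ p : Polynomial ℝ, σ ≠ fun x => p.eval x) (hM : 0 < M)
    (F : C((Icc (fun _ => -M) (fun _ => M) : Set (Fin m → ℝ)), ℝ)) :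
    F ∈ (SM σ m M).topologicalClosure := by
  set coord : Fin m → C((Icc (fun _ => -M) (fun _ => M) : Set (Fin m → ℝ)), ℝ) := fun i =>
    ⟨fun x => (x : Fin m → ℝ) i, (continuous_apply i).comp continuous_subtype_val⟩ with hcoord
  set A := Algebra.adjoin ℝ (Set.range coord) with hA
  set Mon : Set C((Icc (fun _ => -M) (fun _ => M) : Set (Fin m → ℝ)), ℝ) :=
    {f | ∃ (j : ℕ) (v : Fin j → Fin m), ∀ x, f x = ∏ r, (x : Fin m → ℝ) (v r)} with hMon
  have hMonSM : Submodule.span ℝ Mon ≤ (SM σ m M).topologicalClosure := by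
    rw [Submodule.span_le]
    rintro f ⟨j, v, hf⟩
    exact monomial_mem hσc hσp hM j v f hf
  have hmulMon : ∀ a ∈ Mon, ∀ b ∈ Mon, a * b ∈ Mon := by
    rintro a ⟨j1, v1, h1⟩ b ⟨j2, v2, h2⟩
    refine ⟨j1 + j2, Fin.append v1 v2, fun x => ?_⟩
    rw [ContinuousMap.mul_apply, h1 x, h2 x, Fin.prod_univ_add]
    congr 1
    · exact Finset.prod_congr rfl fun r _ => by rw [Fin.append_left]
    · exact Finset.prod_congr rfl fun r _ => by rw [Fin.append_right]
  have hAMon : (A : Set C((Icc (fun _ => -M) (fun _ => M) : Set (Fin m → ℝ)), ℝ)) ⊆ (Submodule.span ℝ Mon : Set C((Icc (fun _ => -M) (fun _ => M) : Set (Fin m → ℝ)), ℝ)) := by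
    intro f hf
    induction hf using Algebra.adjoin_induction with
    | mem f hf =>
      obtain ⟨i, rfl⟩ := hf
      exact Submodule.subset_span ⟨1, fun _ => i, fun x => by
        rw [Fin.prod_univ_one]; rfl⟩
    | algebraMap r =>
      have h1 : (1 : C((Icc (fun _ => -M) (fun _ => M) : Set (Fin m → ℝ)), ℝ)) ∈ Mon := ⟨0, Fin.elim0, fun x => by simp⟩
      have : (algebraMap ℝ C((Icc (fun _ => -M) (fun _ => M) : Set (Fin m → ℝ)), ℝ)) r = r • (1 : C((Icc (fun _ => -M) (fun _ => M) : Set (Fin m → ℝ)), ℝ)) := by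
        rw [Algebra.algebraMap_eq_smul_one]
      rw [this]
      exact Submodule.smul_mem _ _ (Submodule.subset_span h1)
    | add f g _ _ hfm hgm => exact Submodule.add_mem _ hfm hgm
    | mul f g _ _ hfm hgm =>
      have := Submodule.mul_mem_mul (M := Submodule.span ℝ Mon)
        (N := Submodule.span ℝ Mon) hfm hgm
      rw [Submodule.span_mul_span] at this
      refine Submodule.span_le.2 ?_ this
      rw [Set.mul_subset_iff]
      intro a ha b hb
      exact Submodule.subset_span (hmulMon a ha b hb)
  have hsep : A.SeparatesPoints := by
    intro x y hxy
    have : ∃ i, (x : Fin m → ℝ) i ≠ (y : Fin m → ℝ) i := by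
      by_contra h
      push_neg at h
      exact hxy (Subtype.ext (funext h))
    obtain ⟨i, hi⟩ := this
    exact ⟨coord i, ⟨coord i, Algebra.subset_adjoin ⟨i, rfl⟩, rfl⟩, hi⟩
  have htop := ContinuousMap.subalgebra_topologicalClosure_eq_top_of_separatesPoints A hsep
  have hFA : F ∈ closure (A : Set C((Icc (fun _ => -M) (fun _ => M) : Set (Fin m → ℝ)), ℝ)) := by
    have : F ∈ A.topologicalClosure := htop ▸ Algebra.mem_top
    exact this
  have h2 : closure (A : Set C((Icc (fun _ => -M) (fun _ => M) : Set (Fin m → ℝ)), ℝ)) ⊆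
      closure ((Submodule.span ℝ Mon : Submodule ℝ _) :
        Set C((Icc (fun _ => -M) (fun _ => M) : Set (Fin m → ℝ)), ℝ)) := closure_mono hAMon
  have h3 : closure ((Submodule.span ℝ Mon : Submodule ℝ _) :
        Set C((Icc (fun _ => -M) (fun _ => M) : Set (Fin m → ℝ)), ℝ)) ⊆
      closure (((SM σ m M).topologicalClosure : Submodule ℝ _) :
        Set C((Icc (fun _ => -M) (fun _ => M) : Set (Fin m → ℝ)), ℝ)) :=
    closure_mono (fun f hf => hMonSM hf)
  have h4 := (Submodule.isClosed_topologicalClosure (SM σ m M)).closure_eq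
  have h5 := h3 (h2 hFA)
  rw [h4] at h5
  exact h5

lemma repr_mem {σ : ℝ → ℝ} {m : ℕ} {M : ℝ}
    {g : C((Icc (fun _ => -M) (fun _ => M) : Set (Fin m → ℝ)), ℝ)} (hg : g ∈ SM σ m M) :
    ∃ (r : ℕ) (co : Fin r → ℝ) (w : Fin r → (Fin m → ℝ)) (θ : Fin r → ℝ),
      ∀ x : (Icc (fun _ => -M) (fun _ => M) : Set (Fin m → ℝ)),
        g x = ∑ i, co i * σ (∑ q, w i q * (x : Fin m → ℝ) q + θ i) := by
  induction hg using Submodule.span_induction with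
  | mem f hf =>
    obtain ⟨w0, θ0, hf⟩ := hf
    exact ⟨1, fun _ => 1, fun _ => w0, fun _ => θ0, fun x => by
      rw [Fin.sum_univ_one, one_mul, hf x]⟩
  | zero => exact ⟨0, Fin.elim0, Fin.elim0, Fin.elim0, fun x => by simp⟩
  | add f g _ _ ihf ihg =>
    obtain ⟨rf, cof, wf, θf, hf⟩ := ihf
    obtain ⟨rg, cog, wg, θg, hg⟩ := ihg
    refine ⟨rf + rg, Fin.append cof cog, Fin.append wf wg, Fin.append θf θg, fun x => ?_⟩
    rw [ContinuousMap.add_apply, hf x, hg x, Fin.sum_univ_add]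
    congr 1
    · exact Finset.sum_congr rfl fun i _ => by rw [Fin.append_left, Fin.append_left, Fin.append_left]
    · exact Finset.sum_congr rfl fun i _ => by rw [Fin.append_right, Fin.append_right, Fin.append_right]
  | smul a f _ ihf =>
    obtain ⟨rf, cof, wf, θf, hf⟩ := ihf
    refine ⟨rf, a • cof, wf, θf, fun x => ?_⟩
    rw [ContinuousMap.smul_apply, hf x, smul_eq_mul, Finset.mul_sum]
    exact Finset.sum_congr rfl fun i _ => by rw [Pi.smul_apply, smul_eq_mul, mul_assoc]

theorem stmt10 (m n : ℕ) (M : ℝ) (hM : 0 < M)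
    (Φ : (Fin m → ℝ) → (Fin n → ℝ)) (hΦ : Continuous Φ)
    (σ : ℝ → ℝ) (hσc : Continuous σ)
    (hσp : ∀ p : Polynomial ℝ, σ ≠ fun x => p.eval x)
    (ε : ℝ) (hε : 0 < ε) :
    ∃ (p : ℕ) (A : Matrix (Fin p) (Fin m) ℝ) (b : Fin p → ℝ)
      (C : Matrix (Fin n) (Fin p) ℝ),
      ∀ a : Fin m → ℝ, (∀ i, a i ∈ Set.Icc (-M) M) →
        ∀ k, |C.mulVec (fun i => σ (A.mulVec a i + b i)) k - Φ a k| < ε := by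
  set Φk : Fin n → C((Icc (fun _ => -M) (fun _ => M) : Set (Fin m → ℝ)), ℝ) := fun k =>
    ⟨fun x => Φ (x : Fin m → ℝ) k,
      (continuous_apply k).comp (hΦ.comp continuous_subtype_val)⟩ with hΦk
  have happrox : ∀ k : Fin n, ∃ g ∈ SM σ m M, dist (Φk k) g < ε := by
    intro k
    have h1 := all_mem hσc hσp hM (Φk k)
    rw [← SetLike.mem_coe, Submodule.topologicalClosure_coe, Metric.mem_closure_iff] at h1
    exact h1 ε hε
  choose g hgmem hgdist using happrox
  choose r co w θ hrepr using fun k => repr_mem (hgmem k)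
  set N : ℕ := Finset.univ.sup r with hN
  have hrN : ∀ k, r k ≤ N := fun k => Finset.le_sup (Finset.mem_univ k)
  set co' : Fin n → Fin N → ℝ := fun k i =>
    if h : (i : ℕ) < r k then co k ⟨i, h⟩ else 0 with hco'
  set w' : Fin n → Fin N → (Fin m → ℝ) := fun k i =>
    if h : (i : ℕ) < r k then w k ⟨i, h⟩ else 0 with hw'
  set θ' : Fin n → Fin N → ℝ := fun k i =>
    if h : (i : ℕ) < r k then θ k ⟨i, h⟩ else 0 with hθ'
  refine ⟨n * N,
    Matrix.of (fun j q => w' (finProdFinEquiv.symm j).1 (finProdFinEquiv.symm j).2 q),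
    fun j => θ' (finProdFinEquiv.symm j).1 (finProdFinEquiv.symm j).2,
    Matrix.of (fun k j => if (finProdFinEquiv.symm j).1 = k
      then co' (finProdFinEquiv.symm j).1 (finProdFinEquiv.symm j).2 else 0),
    ?_⟩
  intro a ha k
  have hax : a ∈ (Icc (fun _ => -M) (fun _ => M) : Set (Fin m → ℝ)) := by
    rw [mem_Icc]
    exact ⟨fun i => (ha i).1, fun i => (ha i).2⟩
  set x : (Icc (fun _ => -M) (fun _ => M) : Set (Fin m → ℝ)) := ⟨a, hax⟩ with hx
  have hnet : Matrix.mulVec (Matrix.of (fun k j => if (finProdFinEquiv.symm j).1 = k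
      then co' (finProdFinEquiv.symm j).1 (finProdFinEquiv.symm j).2 else 0))
      (fun j => σ (Matrix.mulVec (Matrix.of (fun j q =>
        w' (finProdFinEquiv.symm j).1 (finProdFinEquiv.symm j).2 q)) a j
        + θ' (finProdFinEquiv.symm j).1 (finProdFinEquiv.symm j).2)) k = g k x := by
    simp only [Matrix.mulVec, dotProduct, Matrix.of_apply]
    rw [← Equiv.sum_comp finProdFinEquiv (fun j =>
      (if (finProdFinEquiv.symm j).1 = k
        then co' (finProdFinEquiv.symm j).1 (finProdFinEquiv.symm j).2 else 0) *
      σ (∑ q, w' (finProdFinEquiv.symm j).1 (finProdFinEquiv.symm j).2 q * a q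
        + θ' (finProdFinEquiv.symm j).1 (finProdFinEquiv.symm j).2))]
    simp only [Equiv.symm_apply_apply]
    rw [Fintype.sum_prod_type]
    have hswap : ∀ k' : Fin n, ∑ i : Fin N,
        (if k' = k then co' k' i else 0) * σ (∑ q, w' k' i q * a q + θ' k' i)
        = if k' = k then ∑ i : Fin N, co' k i * σ (∑ q, w' k i q * a q + θ' k i) else 0 := by
      intro k'
      by_cases h : k' = k
      · subst h; simp
      · simp [h]
    rw [Finset.sum_congr rfl fun k' _ => hswap k', Finset.sum_ite_eq' Finset.univ k]
    simp only [Finset.mem_univ, if_true]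
    -- now reduce the padded sum to the true representation
    set t : ℕ → ℝ := fun i => if h : i < r k
      then co k ⟨i, h⟩ * σ (∑ q, w k ⟨i, h⟩ q * a q + θ k ⟨i, h⟩) else 0 with ht
    have hNt : ∀ i : Fin N, co' k i * σ (∑ q, w' k i q * a q + θ' k i) = t (i : ℕ) := by
      intro i
      by_cases h : (i : ℕ) < r k
      · simp only [hco', hw', hθ', ht, dif_pos h]
      · simp only [hco', hw', hθ', ht, dif_neg h, zero_mul]
    rw [Finset.sum_congr rfl fun i _ => hNt i, Fin.sum_univ_eq_sum_range,
      ← Finset.sum_subset (Finset.range_subset_range.2 (hrN k))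
        (fun i _ hi => by
          rw [Finset.mem_range, not_lt] at hi
          exact dif_neg (by omega)),
      ← Fin.sum_univ_eq_sum_range]
    rw [hrepr k x]
    refine Finset.sum_congr rfl fun i _ => ?_
    simp only [ht]
    rw [dif_pos i.2]
  rw [show (Φ a k) = Φk k x from rfl, hnet, ← Real.dist_eq, dist_comm]
  exact lt_of_le_of_lt (ContinuousMap.dist_apply_le_dist x) (hgdist k)
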